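/- Define h#(n) = √n · #{ l : 1 ≤ l ≤ n, 2n | (n−l)l }. Then h# is a multiplicative function of n. -/

import Mathlib

open Finset

-- transfer: counting l in [1,n] with a residue-class condition equals counting in ZMod n
lemma card_Icc_filter_zmod (n : ℕ) [NeZero n] (P : ℕ → Prop) [DecidablePred P]
    (Q : ZMod n → Prop) [DecidablePred Q] (hPQ : ∀ l, P l ↔ Q (l : ZMod n)) :
    ((Icc 1 n).filter P).card = Fintype.card {x : ZMod n // Q x} := by
  have hn : 0 < n := Nat.pos_of_ne_zero (NeZero.ne n)
  rw [Fintype.card_subtype]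
  refine Finset.card_bij (fun (l : ℕ) (_ : l ∈ (Icc 1 n).filter P) => (l : ZMod n)) ?_ ?_ ?_
  · intro l hl
    simp only [mem_filter, mem_Icc] at hl ⊢
    exact ⟨mem_univ _, (hPQ l).mp hl.2⟩
  · intro l₁ h₁ l₂ h₂ heq
    simp only [mem_filter, mem_Icc] at h₁ h₂
    have hv : l₁ % n = l₂ % n := by
      have := congrArg ZMod.val heq
      simpa [ZMod.val_natCast] using this
    rcases eq_or_lt_of_le h₁.1.2 with h | h
    · rcases eq_or_lt_of_le h₂.1.2 with h' | h'
      · omega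
      · rw [h, Nat.mod_self, Nat.mod_eq_of_lt h'] at hv; omega
    · rcases eq_or_lt_of_le h₂.1.2 with h' | h'
      · rw [Nat.mod_eq_of_lt h, h', Nat.mod_self] at hv; omega
      · rw [Nat.mod_eq_of_lt h, Nat.mod_eq_of_lt h'] at hv; omega
  · intro x hx
    simp only [mem_filter, mem_univ, true_and] at hx
    by_cases h0 : x = 0
    · refine ⟨n, ?_, ?_⟩
      · simp only [mem_filter, mem_Icc]
        refine ⟨⟨hn, le_refl n⟩, ?_⟩
        rw [hPQ]
        simpa [ZMod.natCast_self, h0] using hx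
      · simp [ZMod.natCast_self, h0]
    · refine ⟨x.val, ?_, ?_⟩
      · simp only [mem_filter, mem_Icc]
        have hv : (x.val : ZMod n) = x := ZMod.natCast_rightInverse x
        refine ⟨⟨?_, (x.val_lt).le⟩, by rw [hPQ, hv]; exact hx⟩
        have : x.val ≠ 0 := fun hc => h0 (by rwa [ZMod.val_eq_zero] at hc)
        omega
      · exact ZMod.natCast_rightInverse x

-- For l ≤ n : 2n ∣ (n-l)l ↔ 2n ∣ l(l+n)
lemma dvd_flip (n l : ℕ) (h : l ≤ n) : 2*n ∣ (n-l)*l ↔ 2*n ∣ l*(l+n) := by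
  obtain ⟨k, rfl⟩ := Nat.exists_eq_add_of_le h
  have hsum : (l + k - l)*l + l*(l+(l+k)) = 2*(l+k)*l := by
    rw [Nat.add_sub_cancel_left]; ring
  constructor
  · intro hd
    have := Nat.dvd_sub (Dvd.intro l rfl : 2*(l+k) ∣ 2*(l+k)*l) hd
    rwa [show 2*(l+k)*l - (l+k-l)*l = l*(l+(l+k)) by omega] at this
  · intro hd
    have := Nat.dvd_sub (Dvd.intro l rfl : 2*(l+k) ∣ 2*(l+k)*l) hd
    rwa [show 2*(l+k)*l - l*(l+(l+k)) = (l+k-l)*l by omega] at this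

-- shift invariance
lemma dvd_shift (n l : ℕ) : 2*n ∣ (l+n)*((l+n)+n) ↔ 2*n ∣ l*(l+n) := by
  have hsum : (l+n)*((l+n)+n) = l*(l+n) + 2*n*(l+n) := by ring
  rw [hsum]
  constructor
  · intro hd
    have := Nat.dvd_sub hd (Dvd.intro (l+n) rfl)
    rwa [Nat.add_sub_cancel] at this
  · intro hd
    exact Nat.dvd_add hd (Dvd.intro (l+n) rfl)

-- doubling
lemma cardB_eq (n : ℕ) (hn : 0 < n) :
    ((Icc 1 (2*n)).filter (fun y => 2*n ∣ y*(y+n))).card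
      = 2 * ((Icc 1 n).filter (fun l => 2*n ∣ (n-l)*l)).card := by
  have hsplit : Icc 1 (2*n) = Icc 1 n ∪ Ioc n (2*n) := by
    ext x; simp only [mem_Icc, mem_union, mem_Ioc]; omega
  have hdisj : Disjoint ((Icc 1 n).filter (fun y => 2*n ∣ y*(y+n)))
      ((Ioc n (2*n)).filter (fun y => 2*n ∣ y*(y+n))) := by
    apply Finset.disjoint_filter_filter
    rw [Finset.disjoint_left]
    intro x hx hx'
    simp only [mem_Icc, mem_Ioc] at hx hx'; omega
  rw [hsplit, filter_union, card_union_of_disjoint hdisj]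
  have h1 : (Icc 1 n).filter (fun y => 2*n ∣ y*(y+n))
      = (Icc 1 n).filter (fun l => 2*n ∣ (n-l)*l) := by
    apply filter_congr
    intro l hl
    simp only [mem_Icc] at hl
    exact (dvd_flip n l hl.2).symm
  have h2 : ((Ioc n (2*n)).filter (fun y => 2*n ∣ y*(y+n))).card
      = ((Icc 1 n).filter (fun l => 2*n ∣ (n-l)*l)).card := by
    symm
    refine Finset.card_bij (fun (l : ℕ) (_ : l ∈ (Icc 1 n).filter (fun l => 2*n ∣ (n-l)*l)) => l + n) ?_ ?_ ?_
    · intro l hl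
      simp only [mem_filter, mem_Icc, mem_Ioc] at hl ⊢
      refine ⟨by omega, ?_⟩
      rw [dvd_shift, ← dvd_flip n l hl.1.2]
      exact hl.2
    · intro l₁ h₁ l₂ h₂ heq; omega
    · intro y hy
      simp only [mem_filter, mem_Ioc] at hy
      refine ⟨y - n, ?_, show y - n + n = y by omega⟩
      simp only [mem_filter, mem_Icc]
      have hyn : y - n + n = y := by omega
      refine ⟨by omega, ?_⟩
      rw [dvd_flip n (y-n) (by omega), ← dvd_shift n (y-n), hyn]
      exact hy.2
  rw [h1, h2]; ring

-- odd case: A(a) counted in ZMod a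
lemma oddA (a : ℕ) [NeZero a] (hodd : Odd a) :
    ((Icc 1 a).filter (fun l => 2*a ∣ (a-l)*l)).card
      = Fintype.card {x : ZMod a // x*x = 0} := by
  have hstep : ∀ l ∈ Icc 1 a, (2*a ∣ (a-l)*l) ↔ (a ∣ l*l) := by
    intro l hl
    simp only [mem_Icc] at hl
    rw [dvd_flip a l hl.2]
    constructor
    · intro hd
      have hda : a ∣ l*(l+a) := dvd_trans (dvd_mul_left a 2) hd
      have : l*(l+a) = l*l + l*a := by ring
      rw [this] at hda
      have := Nat.dvd_sub hda (dvd_mul_left a l)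
      rwa [Nat.add_sub_cancel] at this
    · intro hd
      have hda : a ∣ l*(l+a) := by
        have : l*(l+a) = l*l + l*a := by ring
        rw [this]
        exact Nat.dvd_add hd (dvd_mul_left a l)
      have h2 : 2 ∣ l*(l+a) := by
        rcases Nat.even_or_odd l with he | ho
        · exact (he.mul_right _).two_dvd
        · exact ((ho.add_odd hodd).mul_left l).two_dvd
      exact Nat.Coprime.mul_dvd_of_dvd_of_dvd (Nat.coprime_two_left.mpr hodd) h2 hda
  rw [filter_congr hstep]
  apply card_Icc_filter_zmod a _ (fun x => x*x = 0)
  intro l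
  rw [← ZMod.natCast_eq_zero_iff (l*l) a]
  push_cast
  rfl

-- B(n) counted in ZMod (2n)
lemma cardB_zmod (n : ℕ) [NeZero n] :
    ((Icc 1 (2*n)).filter (fun y => 2*n ∣ y*(y+n))).card
      = Fintype.card {y : ZMod (2*n) // y*(y+(n : ZMod (2*n))) = 0} := by
  apply card_Icc_filter_zmod (2*n) _ (fun y => y*(y+(n : ZMod (2*n))) = 0)
  intro l
  rw [← ZMod.natCast_eq_zero_iff (l*(l+n)) (2*n)]
  push_cast
  rfl

-- CRT splitting
lemma crt_card (a b : ℕ) [NeZero a] [NeZero b] (hodd : Odd a) (hab : Nat.Coprime a b) :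
    Fintype.card {z : ZMod (a*(2*b)) // z*(z + ((a*b : ℕ) : ZMod (a*(2*b)))) = 0}
      = Fintype.card {x : ZMod a // x*x = 0}
        * Fintype.card {y : ZMod (2*b) // y*(y + ((b : ℕ) : ZMod (2*b))) = 0} := by
  have hcop : Nat.Coprime a (2*b) :=
    Nat.Coprime.mul_right (Nat.coprime_two_right.mpr hodd) hab
  let e := ZMod.chineseRemainder hcop
  have hcast1 : ((a*b : ℕ) : ZMod a) = 0 := by
    push_cast
    simp [ZMod.natCast_self]
  have hcast2 : ((a*b : ℕ) : ZMod (2*b)) = ((b : ℕ) : ZMod (2*b)) := by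
    obtain ⟨k, hk⟩ := hodd
    subst hk
    have : (2*k+1)*b = 2*b*k + b := by ring
    rw [this, Nat.cast_add, Nat.cast_mul, ZMod.natCast_self, zero_mul, zero_add]
  have he : {z : ZMod (a*(2*b)) // z*(z + ((a*b : ℕ) : ZMod (a*(2*b)))) = 0}
      ≃ {p : ZMod a × ZMod (2*b) // p.1*p.1 = 0 ∧ p.2*(p.2 + ((b:ℕ) : ZMod (2*b))) = 0} := by
    refine e.toEquiv.subtypeEquiv (fun z => ?_)
    have hinj : Function.Injective e := e.injective
    constructor
    · intro hz
      have := congrArg e hz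
      rw [map_mul, map_add, map_zero, map_natCast] at this
      have h1 := congrArg Prod.fst this
      have h2 := congrArg Prod.snd this
      simp only [Prod.fst_mul, Prod.fst_add, Prod.snd_mul, Prod.snd_add] at h1 h2
      constructor
      · rw [show (((a*b : ℕ) : ZMod a × ZMod (2*b))).1 = ((a*b : ℕ) : ZMod a) by simp,
          hcast1, add_zero] at h1
        exact h1
      · rw [show (((a*b : ℕ) : ZMod a × ZMod (2*b))).2 = ((a*b : ℕ) : ZMod (2*b)) by simp,
          hcast2] at h2
        exact h2
    · intro ⟨hz1, hz2⟩
      apply hinj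
      rw [map_mul, map_add, map_zero, map_natCast]
      ext
      · simp only [Prod.fst_mul, Prod.fst_add, Prod.fst_zero]
        rw [show (((a*b : ℕ) : ZMod a × ZMod (2*b))).1 = ((a*b : ℕ) : ZMod a) by simp,
          hcast1, add_zero]
        exact hz1
      · simp only [Prod.snd_mul, Prod.snd_add, Prod.snd_zero]
        rw [show (((a*b : ℕ) : ZMod a × ZMod (2*b))).2 = ((a*b : ℕ) : ZMod (2*b)) by simp,
          hcast2]
        exact hz2
  rw [Fintype.card_congr he, ← Fintype.card_prod]
  exact Fintype.card_congr (Equiv.subtypeProdEquivProd (p := fun x : ZMod a => x*x = 0) (q := fun y : ZMod (2*b) => y*(y + ((b:ℕ) : ZMod (2*b))) = 0))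

-- the main counting identity, odd case
lemma cardA_mul_odd (a b : ℕ) (ha : 0 < a) (hb : 0 < b) (hodd : Odd a) (hab : Nat.Coprime a b) :
    ((Icc 1 (a*b)).filter (fun l => 2*(a*b) ∣ (a*b - l)*l)).card
      = ((Icc 1 a).filter (fun l => 2*a ∣ (a-l)*l)).card
        * ((Icc 1 b).filter (fun l => 2*b ∣ (b-l)*l)).card := by
  haveI : NeZero a := ⟨ha.ne'⟩
  haveI : NeZero b := ⟨hb.ne'⟩
  haveI : NeZero (a*(2*b)) := ⟨by positivity⟩
  have hBab : 2 * ((Icc 1 (a*b)).filter (fun l => 2*(a*b) ∣ (a*b - l)*l)).card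
      = ((Icc 1 (2*(a*b))).filter (fun y => 2*(a*b) ∣ y*(y+a*b))).card :=
    (cardB_eq (a*b) (by positivity)).symm
  have hconv : ((Icc 1 (2*(a*b))).filter (fun y => 2*(a*b) ∣ y*(y+a*b))).card
      = Fintype.card {z : ZMod (a*(2*b)) // z*(z + ((a*b : ℕ) : ZMod (a*(2*b)))) = 0} := by
    rw [show 2*(a*b) = a*(2*b) by ring]
    apply card_Icc_filter_zmod (a*(2*b)) _ (fun z => z*(z + ((a*b : ℕ) : ZMod (a*(2*b)))) = 0)
    intro l
    rw [← ZMod.natCast_eq_zero_iff (l*(l+a*b)) (a*(2*b))]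
    push_cast
    rfl
  have hBb : ((Icc 1 (2*b)).filter (fun y => 2*b ∣ y*(y+b))).card
      = 2 * ((Icc 1 b).filter (fun l => 2*b ∣ (b-l)*l)).card := cardB_eq b hb
  have hBbz := cardB_zmod b
  have hA := oddA a hodd
  have hcrt := crt_card a b hodd hab
  have hchain : 2 * ((Icc 1 (a*b)).filter (fun l => 2*(a*b) ∣ (a*b - l)*l)).card
      = ((Icc 1 a).filter (fun l => 2*a ∣ (a-l)*l)).card
        * (2 * ((Icc 1 b).filter (fun l => 2*b ∣ (b-l)*l)).card) := by
    rw [hBab, hconv, hcrt, ← hA, ← hBbz, hBb]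
  have h2 : ((Icc 1 a).filter (fun l => 2*a ∣ (a-l)*l)).card
        * (2 * ((Icc 1 b).filter (fun l => 2*b ∣ (b-l)*l)).card)
      = 2 * (((Icc 1 a).filter (fun l => 2*a ∣ (a-l)*l)).card
        * ((Icc 1 b).filter (fun l => 2*b ∣ (b-l)*l)).card) := by ring
  rw [h2] at hchain
  exact Nat.eq_of_mul_eq_mul_left (by norm_num) hchain

lemma cardA_mul (a b : ℕ) (ha : 0 < a) (hb : 0 < b) (hab : Nat.Coprime a b) :
    ((Icc 1 (a*b)).filter (fun l => 2*(a*b) ∣ (a*b - l)*l)).card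
      = ((Icc 1 a).filter (fun l => 2*a ∣ (a-l)*l)).card
        * ((Icc 1 b).filter (fun l => 2*b ∣ (b-l)*l)).card := by
  rcases Nat.even_or_odd a with hea | hoa
  · have hob : Odd b := by
      rcases Nat.even_or_odd b with heb | hob
      · exfalso
        have h2 : (2:ℕ) ∣ Nat.gcd a b := Nat.dvd_gcd hea.two_dvd heb.two_dvd
        rw [Nat.Coprime] at hab
        omega
      · exact hob
    rw [show a*b = b*a by ring, cardA_mul_odd b a hb ha hob hab.symm, Nat.mul_comm]
  · exact cardA_mul_odd a b ha hb hoa hab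

theorem hsharp_multiplicative
    (h : ℕ → ℝ)
    (hdef : ∀ n : ℕ, h n = Real.sqrt n *
      ((Finset.Icc 1 n).filter (fun l => 2 * n ∣ (n - l) * l)).card) :
    h 1 = 1 ∧ ∀ a b : ℕ, 0 < a → 0 < b → Nat.Coprime a b →
      h (a * b) = h a * h b := by
  constructor
  · rw [hdef 1]
    have hc : ((Finset.Icc 1 1).filter (fun l => 2 * 1 ∣ (1 - l) * l)) = {1} := by decide
    rw [hc]
    simp
  · intro a b ha hb hab
    rw [hdef (a*b), hdef a, hdef b, cardA_mul a b ha hb hab]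
    rw [Nat.cast_mul, Real.sqrt_mul (by positivity), Nat.cast_mul]
    ring
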